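/- Let 0 < a < b and n ≥ 1. Define h_i = √a · (i/n) + √b · ((n−i)/n) for i = 0, …, n, Γ_i = ab/(h_{i−1} h_i) for i = 1, …, n, and g_i = ab/h_i² for i = 0, …, n. Then: (i) g_0 = a and g_n = b; (ii) the sequence (g_i) is strictly increasing and g_{i−1} < Γ_i < g_i for every i; (iii) for every 1 ≤ i ≤ n−1, g_i = H(Γ_i, Γ_{i+1}), where H(x,y) = 2/(1/x + 1/y) is the harmonic mean. -/

import Mathlib

/-- Structure of the robust `n`-element decision menu: the induced partition
boundaries `g_i = ab/h_i²` run increasingly from `a` to `b`, the targeted risk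
types `Γ_i = ab/(h_{i−1}h_i)` interlace them, and each interior boundary is the
harmonic mean of the two adjacent targeted risk types. -/
theorem stmt_14 (a b : ℝ) (ha : 0 < a) (hab : a < b) (n : ℕ) (hn : 1 ≤ n)
    (h : ℕ → ℝ)
    (hh : ∀ i : ℕ, h i = Real.sqrt a * ((i : ℝ)/(n : ℝ)) +
      Real.sqrt b * (((n : ℝ) - (i : ℝ))/(n : ℝ)))
    (Γ : ℕ → ℝ) (hΓ : ∀ i : ℕ, Γ i = a * b / (h (i-1) * h i))
    (g : ℕ → ℝ) (hg : ∀ i : ℕ, g i = a * b / (h i)^2)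
    (H : ℝ → ℝ → ℝ) (hH : ∀ x y : ℝ, H x y = 2 / (1/x + 1/y)) :
    (g 0 = a ∧ g n = b) ∧
    ((∀ i j : ℕ, i < j → j ≤ n → g i < g j) ∧
      ∀ i : ℕ, 1 ≤ i → i ≤ n → g (i-1) < Γ i ∧ Γ i < g i) ∧
    (∀ i : ℕ, 1 ≤ i → i ≤ n - 1 → g i = H (Γ i) (Γ (i+1))) := by
  have hb : 0 < b := ha.trans hab
  have hnR : (0:ℝ) < (n:ℝ) := by exact_mod_cast hn
  have hsa : 0 < Real.sqrt a := Real.sqrt_pos.2 ha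
  have hsab : Real.sqrt a < Real.sqrt b := Real.sqrt_lt_sqrt ha.le hab
  have hab' : 0 < a * b := mul_pos ha hb
  have hlb : ∀ i : ℕ, i ≤ n → Real.sqrt a ≤ h i := by
    intro i hi
    have h1 : (i:ℝ) ≤ n := by exact_mod_cast hi
    have h2 : (0:ℝ) ≤ (i:ℝ) := Nat.cast_nonneg i
    have heq : Real.sqrt a * ((i:ℝ)/n) + Real.sqrt a * (((n:ℝ)-i)/n) = Real.sqrt a := by
      field_simp; ring
    have hmono : Real.sqrt a * (((n:ℝ)-i)/n) ≤ Real.sqrt b * (((n:ℝ)-i)/n) := by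
      apply mul_le_mul_of_nonneg_right hsab.le
      exact div_nonneg (by linarith) hnR.le
    rw [hh]; linarith
  have hpos : ∀ i : ℕ, i ≤ n → 0 < h i := fun i hi => lt_of_lt_of_le hsa (hlb i hi)
  have hdec : ∀ i j : ℕ, i < j → j ≤ n → h j < h i := by
    intro i j hij hjn
    have h1 : (i:ℝ) < j := by exact_mod_cast hij
    rw [hh, hh]
    have key : Real.sqrt a * (j:ℝ) + Real.sqrt b * ((n:ℝ)-j)
        < Real.sqrt a * (i:ℝ) + Real.sqrt b * ((n:ℝ)-i) := by nlinarith
    rw [mul_div_assoc', mul_div_assoc', mul_div_assoc', mul_div_assoc',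
      ← add_div, ← add_div, div_lt_div_iff_of_pos_right hnR]
    exact key
  have h0 : h 0 = Real.sqrt b := by rw [hh]; field_simp; push_cast; ring
  have hnn : h n = Real.sqrt a := by rw [hh]; field_simp; ring
  have hg0 : g 0 = a := by
    rw [hg, h0, Real.sq_sqrt hb.le]; field_simp
  have hgn : g n = b := by
    rw [hg, hnn, Real.sq_sqrt ha.le]; field_simp
  have hinc : ∀ i j : ℕ, i < j → j ≤ n → g i < g j := by
    intro i j hij hjn
    have hpi := hpos i (le_of_lt (lt_of_lt_of_le hij hjn))
    have hpj := hpos j hjn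
    have hd := hdec i j hij hjn
    rw [hg, hg, div_lt_div_iff₀ (by positivity) (by positivity)]
    have hsq : h j ^ 2 < h i ^ 2 := by nlinarith
    exact (mul_lt_mul_iff_right₀ hab').2 hsq
  refine ⟨⟨hg0, hgn⟩, ⟨hinc, ?_⟩, ?_⟩
  · intro i h1 hin
    have hi1 : i - 1 < i := Nat.sub_lt h1 one_pos
    have hpi := hpos i hin
    have hpi1 := hpos (i-1) (le_trans (Nat.sub_le i 1) hin)
    have hd := hdec (i-1) i hi1 hin
    constructor
    · rw [hg, hΓ, div_lt_div_iff₀ (by positivity) (by positivity)]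
      exact (mul_lt_mul_iff_right₀ hab').2 (by nlinarith)
    · rw [hg, hΓ, div_lt_div_iff₀ (by positivity) (by positivity)]
      exact (mul_lt_mul_iff_right₀ hab').2 (by nlinarith)
  · intro i h1 hin
    have hin' : i + 1 ≤ n := by omega
    have hpi := hpos i (by omega)
    have hpi1 := hpos (i-1) (by omega)
    have hpi2 := hpos (i+1) hin'
    have hlin : h (i-1) + h (i+1) = 2 * h i := by
      rw [hh, hh, hh]
      have : ((i-1 : ℕ) : ℝ) = (i:ℝ) - 1 := by
        have := Nat.cast_sub h1 (R := ℝ); simpa using this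
      rw [this]
      push_cast
      field_simp
      ring
    have hsum : h (i-1) * h i + h i * h (i+1) = 2 * h i ^ 2 := by
      nlinarith [hlin]
    rw [hg, hH, hΓ, hΓ]
    simp only [Nat.add_sub_cancel]
    rw [one_div_div, one_div_div, ← add_div, hsum, div_div_eq_mul_div]
    rw [mul_div_mul_left _ _ (two_ne_zero)]
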